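/- Let S_W, S_B be real symmetric d×d matrices and t ≤ d. Define ρ = max over V ∈ ℝ^{d×t} with V^T V = I of tr((V^T exp(S_W) V)^{-1} (V^T exp(S_B) V)). Then ρ ≤ Σ_{i=1}^t exp(μ_i − ν_d), where μ_1 ≥ ... ≥ μ_d are the eigenvalues of S_B and ν_1 ≥ ... ≥ ν_d are the eigenvalues of S_W. -/

import Mathlib

open Matrix

section Helpers

variable {n : Type*} [Fintype n] [DecidableEq n]

lemma psd_diag_nonneg' {M : Matrix n n ℝ} (hM : M.PosSemidef) (i : n) : 0 ≤ M i i := by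
  have h := hM.2 (Finsupp.single i 1)
  simpa using h

lemma psd_trace_nonneg' {M : Matrix n n ℝ} (hM : M.PosSemidef) : 0 ≤ M.trace :=
  Finset.sum_nonneg fun i _ => psd_diag_nonneg' hM i

lemma psd_smul' {M : Matrix n n ℝ} (hM : M.PosSemidef) {c : ℝ} (hc : 0 ≤ c) :
    (c • M).PosSemidef := by
  refine ⟨?_, fun x => ?_⟩
  · unfold Matrix.IsHermitian
    rw [conjTranspose_smul, hM.1]
    simp
  · exact (hM.smul hc).2 x

lemma psd_trace_mono' {A B : Matrix n n ℝ} (h : (B - A).PosSemidef) : A.trace ≤ B.trace := by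
  have := psd_trace_nonneg' h
  rw [trace_sub] at this
  linarith

lemma exp_herm' (A : Matrix n n ℝ) (hA : A.IsHermitian) :
    NormedSpace.exp A = (hA.eigenvectorUnitary : Matrix n n ℝ) *
      diagonal (fun i => Real.exp (hA.eigenvalues i)) *
      star (hA.eigenvectorUnitary : Matrix n n ℝ) := by
  set U : Matrix n n ℝ := (hA.eigenvectorUnitary : Matrix n n ℝ) with hUdef
  have hU1 : U * star U = 1 := mem_unitaryGroup_iff.mp hA.eigenvectorUnitary.2
  have hU2 : star U * U = 1 := mem_unitaryGroup_iff'.mp hA.eigenvectorUnitary.2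
  have hU : IsUnit U := ⟨⟨U, star U, hU1, hU2⟩, rfl⟩
  have hinv : U⁻¹ = star U := inv_eq_right_inv hU1
  conv_lhs => rw [hA.spectral_theorem, Unitary.conjStarAlgAut_apply]
  rw [← hUdef, ← hinv,
    Matrix.exp_conj U (diagonal (RCLike.ofReal ∘ hA.eigenvalues)) hU,
    Matrix.exp_diagonal, hinv]
  congr 2
  funext i
  simp [Pi.exp_def, RCLike.ofReal_real_eq_id, ← Real.exp_eq_exp_ℝ]

lemma exp_sub_smul_psd (A : Matrix n n ℝ) (hA : A.IsHermitian) (c : ℝ)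
    (hc : ∀ i, c ≤ hA.eigenvalues i) :
    (NormedSpace.exp A - Real.exp c • 1).PosSemidef := by
  set U : Matrix n n ℝ := (hA.eigenvectorUnitary : Matrix n n ℝ) with hUdef
  have hU1 : U * star U = 1 := mem_unitaryGroup_iff.mp hA.eigenvectorUnitary.2
  have h1 : (Real.exp c • (1 : Matrix n n ℝ)) = U * (Real.exp c • 1) * star U := by
    rw [mul_smul_comm, mul_one, smul_mul_assoc, hU1]
  rw [exp_herm' A hA, ← hUdef, h1, ← Matrix.sub_mul, ← Matrix.mul_sub,
    smul_one_eq_diagonal, diagonal_sub]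
  have hpsd : (diagonal (fun i => Real.exp (hA.eigenvalues i) - Real.exp c)).PosSemidef :=
    PosSemidef.diagonal fun i => by
      have := Real.exp_le_exp.mpr (hc i)
      simpa using this
  have := hpsd.mul_mul_conjTranspose_same U
  simpa [Matrix.star_eq_conjTranspose] using this

lemma exp_psd (A : Matrix n n ℝ) (hA : A.IsHermitian) : (NormedSpace.exp A).PosSemidef := by
  rw [exp_herm' A hA]
  have hpsd : (diagonal (fun i => Real.exp (hA.eigenvalues i))).PosSemidef :=
    PosSemidef.diagonal fun i => (Real.exp_pos _).le
  have := hpsd.mul_mul_conjTranspose_same ((hA.eigenvectorUnitary : Matrix n n ℝ))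
  simpa [Matrix.star_eq_conjTranspose] using this

open scoped MatrixOrder

lemma trace_inv_mul_le {A B : Matrix n n ℝ} (hA : A.PosDef) (hB : B.PosSemidef)
    {c : ℝ} (hc : 0 < c) (hAc : (A - c • 1).PosSemidef) :
    (A⁻¹ * B).trace ≤ c⁻¹ * B.trace := by
  set S := CFC.sqrt A with hSdef
  have hSS : S * S = A := CFC.sqrt_mul_sqrt_self A hA.posSemidef.nonneg
  have hSh : S.IsHermitian := (CFC.sqrt_nonneg A).posSemidef.1
  have hdetA : IsUnit A.det := isUnit_iff_ne_zero.mpr (ne_of_gt hA.det_pos)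
  have hdetS : IsUnit S.det := by
    rw [← hSS, det_mul] at hdetA
    exact isUnit_of_mul_isUnit_left hdetA
  have hSiS : S⁻¹ * S = 1 := nonsing_inv_mul S hdetS
  have hSSi : S * S⁻¹ = 1 := mul_nonsing_inv S hdetS
  have hSih : (S⁻¹).IsHermitian := hSh.inv
  have hSiASi : S⁻¹ * A * S⁻¹ = 1 := by
    rw [← hSS, ← mul_assoc, mul_assoc (S⁻¹ * S), hSiS, one_mul, hSSi]
  have hSiSi : S⁻¹ * S⁻¹ = A⁻¹ := by rw [← Matrix.mul_inv_rev, hSS]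
  have key : ((c⁻¹ • (1 : Matrix n n ℝ)) - A⁻¹).PosSemidef := by
    have h1 : (c⁻¹ • (1 : Matrix n n ℝ)) - A⁻¹ = S⁻¹ * (c⁻¹ • (A - c • 1)) * S⁻¹ := by
      rw [smul_sub, smul_smul, inv_mul_cancel₀ (ne_of_gt hc), one_smul,
        Matrix.mul_sub, Matrix.sub_mul, mul_smul_comm, smul_mul_assoc, hSiASi,
        Matrix.mul_one, hSiSi]
    rw [h1]
    have := (psd_smul' hAc (inv_nonneg.mpr hc.le)).mul_mul_conjTranspose_same (S⁻¹)
    rwa [hSih.eq] at this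
  set R := CFC.sqrt B with hRdef
  have hRR : R * R = B := CFC.sqrt_mul_sqrt_self B hB.nonneg
  have hRh : R.IsHermitian := (CFC.sqrt_nonneg B).posSemidef.1
  have h2 : (A⁻¹ * B).trace = (R * A⁻¹ * R).trace := by
    rw [← hRR, ← mul_assoc, trace_mul_comm, ← mul_assoc]
  have h3 : ((R * (c⁻¹ • (1 : Matrix n n ℝ)) * R) - (R * A⁻¹ * R)).PosSemidef := by
    have := key.mul_mul_conjTranspose_same R
    rwa [hRh.eq, Matrix.mul_sub, Matrix.sub_mul] at this
  have h4 := psd_trace_mono' h3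
  have h5 : (R * (c⁻¹ • (1 : Matrix n n ℝ)) * R).trace = c⁻¹ * B.trace := by
    rw [mul_smul_comm, Matrix.mul_one, smul_mul_assoc, hRR, trace_smul, smul_eq_mul]
  rw [h2]
  rw [h5] at h4
  exact h4

end Helpers

lemma sum_castLE {d t : ℕ} (ht : t ≤ d) (f : Fin d → ℝ) :
    (∑ j : Fin t, f (Fin.castLE ht j)) = ∑ i : Fin d, if (i : ℕ) < t then f i else 0 := by
  have hmem : ∀ x : Fin d, x ∈ Finset.univ.map (Fin.castLEEmb ht) ↔ (x : ℕ) < t := by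
    intro x
    simp only [Finset.mem_map, Finset.mem_univ, true_and]
    constructor
    · rintro ⟨j, rfl⟩; exact j.isLt
    · intro hx; exact ⟨⟨x, hx⟩, by ext; simp⟩
  have h1 : (∑ j : Fin t, f (Fin.castLE ht j))
      = ∑ i ∈ Finset.univ.map (Fin.castLEEmb ht), f i := by
    rw [Finset.sum_map]; rfl
  have h2 : ∑ i ∈ Finset.univ.map (Fin.castLEEmb ht), f i
      = ∑ i ∈ Finset.univ.map (Fin.castLEEmb ht), (if (i : ℕ) < t then f i else 0) := by
    apply Finset.sum_congr rfl
    intro x hx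
    rw [if_pos ((hmem x).mp hx)]
  have h3 : ∑ i : Fin d, (if (i : ℕ) < t then f i else 0)
      = ∑ i ∈ Finset.univ.map (Fin.castLEEmb ht), (if (i : ℕ) < t then f i else 0) := by
    symm
    apply Finset.sum_subset (Finset.subset_univ _)
    intro x _ hx
    rw [if_neg (fun h => hx ((hmem x).mpr h))]
  rw [h1, h2, ← h3]

lemma sum_mul_le_topsum {d t : ℕ} (hd : 0 < d) (ht : t ≤ d) (w g : Fin d → ℝ)
    (hw : Antitone w) (hg0 : ∀ i, 0 ≤ g i) (hg1 : ∀ i, g i ≤ 1)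
    (hgs : ∑ i, g i = t) :
    ∑ i, w i * g i ≤ ∑ j : Fin t, w (Fin.castLE ht j) := by
  have hk : min t (d - 1) < d := lt_of_le_of_lt (min_le_right _ _) (Nat.sub_lt hd Nat.one_pos)
  set k : Fin d := ⟨min t (d - 1), hk⟩ with hkdef
  set τ := w k with hτdef
  set e : Fin d → ℝ := fun i => if (i : ℕ) < t then 1 else 0 with hedef
  have hse : ∑ i, e i = t := by
    rw [hedef, ← sum_castLE ht (fun _ => (1 : ℝ))]
    simp
  have hwe : (∑ j : Fin t, w (Fin.castLE ht j)) = ∑ i, w i * e i := by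
    rw [sum_castLE ht w]
    apply Finset.sum_congr rfl
    intro i _
    by_cases hi : (i : ℕ) < t <;> simp [hedef, hi]
  have hterm : ∀ i : Fin d, (w i - τ) * (g i - e i) ≤ 0 := by
    intro i
    by_cases hi : (i : ℕ) < t
    · have he : e i = 1 := by simp [hedef, hi]
      have h1 : i ≤ k := by
        rw [hkdef, Fin.le_def]
        exact le_min (le_of_lt hi) (Nat.le_sub_one_of_lt i.isLt)
      have h2 : τ ≤ w i := hw h1
      have h3 : g i - e i ≤ 0 := by rw [he]; linarith [hg1 i]
      exact mul_nonpos_of_nonneg_of_nonpos (by linarith) h3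
    · have he : e i = 0 := by simp [hedef, hi]
      have h1 : k ≤ i := by
        rw [hkdef, Fin.le_def]
        exact le_trans (min_le_left _ _) (le_of_not_gt hi)
      have h2 : w i ≤ τ := hw h1
      have h3 : 0 ≤ g i - e i := by rw [he]; linarith [hg0 i]
      exact mul_nonpos_of_nonpos_of_nonneg (by linarith) h3
  have hsum : ∑ i, (w i - τ) * (g i - e i) ≤ 0 :=
    Finset.sum_nonpos fun i _ => hterm i
  have hid : ∑ i, (w i - τ) * (g i - e i)
      = (∑ i, w i * g i) - (∑ i, w i * e i) - τ * ((∑ i, g i) - (∑ i, e i)) := by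
    rw [mul_sub, Finset.mul_sum, Finset.mul_sum, ← Finset.sum_sub_distrib,
      ← Finset.sum_sub_distrib, ← Finset.sum_sub_distrib]
    apply Finset.sum_congr rfl
    intro i _
    ring
  rw [hwe]
  rw [hid, hgs, hse, sub_self, mul_zero, sub_zero] at hsum
  linarith

/-- The EDA criterion value is at most `Σ_{i=1}^t exp(μ_i − ν_d)`: every orthonormal
`V ∈ ℝ^{d×t}` satisfies
`tr((Vᵀ exp(S_W) V)⁻¹ (Vᵀ exp(S_B) V)) ≤ Σ_{i=1}^t exp(μ_i − ν_d)`,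
hence so does the maximum `ρ`. -/
theorem eda_criterion_upper_bound {d t : ℕ} (hd : 0 < d) (ht : t ≤ d)
    (SW SB : Matrix (Fin d) (Fin d) ℝ)
    (hW : SW.IsHermitian) (hB : SB.IsHermitian)
    (ν μ : Fin d → ℝ) (hν : Antitone ν) (hμ : Antitone μ)
    (hνe : ∃ σ : Equiv.Perm (Fin d), ν = hW.eigenvalues ∘ σ)
    (hμe : ∃ σ : Equiv.Perm (Fin d), μ = hB.eigenvalues ∘ σ)
    (V : Matrix (Fin d) (Fin t) ℝ) (hV : Vᵀ * V = 1) :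
    ((Vᵀ * NormedSpace.exp SW * V)⁻¹ * (Vᵀ * NormedSpace.exp SB * V)).trace
      ≤ ∑ i : Fin t,
          Real.exp (μ (Fin.castLE ht i) - ν ⟨d - 1, Nat.sub_lt hd Nat.one_pos⟩) := by
  classical
  set m : Fin d := ⟨d - 1, Nat.sub_lt hd Nat.one_pos⟩ with hmdef
  set c : ℝ := Real.exp (ν m) with hcdef
  have hcpos : 0 < c := Real.exp_pos _
  have hVt : Vᴴ = Vᵀ := conjTranspose_eq_transpose_of_trivial V
  have hVV : Vᴴ * V = 1 := by rw [hVt]; exact hV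
  -- lower bound on eigenvalues of SW
  have hWlow : ∀ i, ν m ≤ hW.eigenvalues i := by
    obtain ⟨σ, hσ⟩ := hνe
    intro i
    have h1 : hW.eigenvalues i = ν (σ.symm i) := by
      rw [hσ]; simp
    rw [h1]
    apply hν
    rw [Fin.le_def]
    exact Nat.le_sub_one_of_lt (σ.symm i).isLt
  set EW := NormedSpace.exp SW with hEWdef
  set EB := NormedSpace.exp SB with hEBdef
  set A := Vᵀ * EW * V with hAdef
  set B := Vᵀ * EB * V with hBdef
  -- A - c•1 is PSD
  have hA1 : (A - c • 1).PosSemidef := by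
    have h0 := (exp_sub_smul_psd SW hW (ν m) hWlow).conjTranspose_mul_mul_same V
    have heq : Vᴴ * (EW - c • 1) * V = A - c • 1 := by
      rw [hVt, Matrix.mul_sub, Matrix.sub_mul, Matrix.mul_smul, Matrix.mul_one,
        Matrix.smul_mul, hV, hAdef]
    rwa [heq] at h0
  -- A is PosDef
  have hApd : A.PosDef := by
    have hc1 : ((c • (1 : Matrix (Fin t) (Fin t) ℝ))).PosDef := by
      rw [smul_one_eq_diagonal]
      exact posDef_diagonal_iff.mpr fun i => hcpos
    have h2 := hc1.add_posSemidef hA1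
    rwa [show c • (1 : Matrix (Fin t) (Fin t) ℝ) + (A - c • 1) = A by abel] at h2
  -- B is PSD
  have hBpsd : B.PosSemidef := by
    have h0 := (exp_psd SB hB).conjTranspose_mul_mul_same V
    rwa [hVt] at h0
  -- first inequality
  have main1 : (A⁻¹ * B).trace ≤ c⁻¹ * B.trace :=
    trace_inv_mul_le hApd hBpsd hcpos hA1
  -- Ky Fan bound on trace B
  obtain ⟨σ, hσ⟩ := hμe
  set U : Matrix (Fin d) (Fin d) ℝ := (hB.eigenvectorUnitary : Matrix (Fin d) (Fin d) ℝ)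
    with hUdef
  have hU1 : U * Uᴴ = 1 := by
    have := mem_unitaryGroup_iff.mp hB.eigenvectorUnitary.2
    rwa [Matrix.star_eq_conjTranspose] at this
  have hU2 : Uᴴ * U = 1 := by
    have := mem_unitaryGroup_iff'.mp hB.eigenvectorUnitary.2
    rwa [Matrix.star_eq_conjTranspose] at this
  set w0 : Fin d → ℝ := fun i => Real.exp (hB.eigenvalues i) with hw0def
  have hEB : EB = U * diagonal w0 * Uᴴ := by
    rw [hEBdef, exp_herm' SB hB, Matrix.star_eq_conjTranspose]
  set N : Matrix (Fin d) (Fin t) ℝ := Uᴴ * V with hNdef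
  have hNh : Nᴴ = Vᴴ * U := by
    rw [hNdef, conjTranspose_mul, conjTranspose_conjTranspose]
  set P := N * Nᴴ with hPdef
  have hPpsd : P.PosSemidef := posSemidef_self_mul_conjTranspose N
  have hB_eq : B = Nᴴ * diagonal w0 * N := by
    rw [hBdef, hEB, ← hVt, hNh, hNdef]
    simp only [Matrix.mul_assoc]
  have htrB : B.trace = ∑ i, w0 i * P i i := by
    rw [hB_eq, Matrix.mul_assoc, trace_mul_comm, Matrix.mul_assoc, ← hPdef]
    simp [Matrix.trace, Matrix.diag, Matrix.diagonal_mul]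
  -- diagonal entries of P are in [0,1] and sum to t
  have hP0 : ∀ i, 0 ≤ P i i := fun i => psd_diag_nonneg' hPpsd i
  have hproj : ((1 : Matrix (Fin d) (Fin d) ℝ) - V * Vᴴ).PosSemidef := by
    have h5 : Vᴴ * (V * Vᴴ) = Vᴴ := by rw [← Matrix.mul_assoc, hVV, Matrix.one_mul]
    have hfact : (1 : Matrix (Fin d) (Fin d) ℝ) - V * Vᴴ
        = ((1 : Matrix (Fin d) (Fin d) ℝ) - V * Vᴴ)ᴴ
          * ((1 : Matrix (Fin d) (Fin d) ℝ) - V * Vᴴ) := by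
      rw [conjTranspose_sub, conjTranspose_one, conjTranspose_mul,
        conjTranspose_conjTranspose, Matrix.sub_mul, Matrix.mul_sub, Matrix.mul_sub,
        Matrix.one_mul, Matrix.mul_one, Matrix.mul_assoc, h5]
      simp only [Matrix.one_mul]
      abel
    rw [hfact]
    exact posSemidef_conjTranspose_mul_self _
  have h1P : ((1 : Matrix (Fin d) (Fin d) ℝ) - P).PosSemidef := by
    have h0 := hproj.conjTranspose_mul_mul_same U
    have heq : Uᴴ * ((1 : Matrix (Fin d) (Fin d) ℝ) - V * Vᴴ) * U = 1 - P := by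
      rw [Matrix.mul_sub, Matrix.sub_mul, Matrix.mul_one, hU2, hPdef, hNdef, hNh]
      simp only [Matrix.mul_assoc]
    rwa [heq] at h0
  have hP1 : ∀ i, P i i ≤ 1 := by
    intro i
    have h0 := psd_diag_nonneg' h1P i
    simp only [Matrix.sub_apply, Matrix.one_apply_eq] at h0
    linarith
  have hPs : ∑ i, P i i = (t : ℝ) := by
    have h1 : ∑ i, P i i = P.trace := rfl
    rw [h1, hPdef, trace_mul_comm, hNh, hNdef, Matrix.mul_assoc, ← Matrix.mul_assoc U,
      hU1, Matrix.one_mul, hVV]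
    simp
  -- reindex by σ and apply the rearrangement bound
  have hrei : ∑ i, w0 i * P i i = ∑ j, Real.exp (μ j) * P (σ j) (σ j) := by
    rw [← Equiv.sum_comp σ (fun i => w0 i * P i i)]
    apply Finset.sum_congr rfl
    intro j _
    rw [hσ]
    simp [hw0def]
  have hKF : B.trace ≤ ∑ j : Fin t, Real.exp (μ (Fin.castLE ht j)) := by
    rw [htrB, hrei]
    apply sum_mul_le_topsum hd ht (fun j => Real.exp (μ j)) (fun j => P (σ j) (σ j))
    · exact fun a b hab => Real.exp_le_exp.mpr (hμ hab)
    · exact fun i => hP0 _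
    · exact fun i => hP1 _
    · rw [Equiv.sum_comp σ (fun i => P i i), hPs]
  -- combine
  have final : (A⁻¹ * B).trace ≤ c⁻¹ * ∑ j : Fin t, Real.exp (μ (Fin.castLE ht j)) :=
    le_trans main1 (mul_le_mul_of_nonneg_left hKF (inv_nonneg.mpr hcpos.le))
  calc (A⁻¹ * B).trace ≤ c⁻¹ * ∑ j : Fin t, Real.exp (μ (Fin.castLE ht j)) := final
    _ = ∑ i : Fin t, Real.exp (μ (Fin.castLE ht i) - ν m) := by
        rw [Finset.mul_sum]
        apply Finset.sum_congr rfl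
        intro i _
        rw [Real.exp_sub, hcdef, div_eq_mul_inv, mul_comm]
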